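/- For nonnegative integers n and r, the two variable degenerate Fubini polynomial satisfies F_{n,λ}(x|r) = ∑_{k=0}^n k! {n+r brace k+r}_{r,λ} x^k. -/

import Mathlib

lemma coeff_zero_of_bigO (c : ℕ → ℝ) (n : ℕ) (ε C : ℝ) (hε : 0 < ε) (g : ℝ → ℝ)
    (h : ∀ t : ℝ, |t| < ε → HasSum (fun m : ℕ => c m * t ^ m / m.factorial) (g t))
    (hg : ∀ t : ℝ, |t| < ε → |g t| ≤ C * |t| ^ (n + 1)) :
    ∀ m ≤ n, c m = 0 := by
  set t0 : ℝ := ε / 2 with ht0def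
  have ht0 : 0 < t0 := by positivity
  have ht0ε : |t0| < ε := by rw [abs_of_pos ht0]; linarith
  have hsum0 := (h t0 ht0ε).summable.abs
  set B : ℝ := ∑' i, |c i * t0 ^ i / (i.factorial : ℝ)| with hBdef
  have hB : ∀ i : ℕ, |c i * t0 ^ i / (i.factorial : ℝ)| ≤ B := fun i =>
    Summable.le_tsum hsum0 i (fun j _ => abs_nonneg _)
  have hB0 : 0 ≤ B := le_trans (abs_nonneg _) (hB 0)
  intro m
  induction m using Nat.strong_induction_on with
  | _ m ih =>
  intro hmn
  set K : ℝ := |C| + 2 * B / t0 ^ (m + 1) with hKdef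
  have hK0 : 0 ≤ K := by positivity
  -- main estimate
  have key : ∀ t : ℝ, 0 < t → t < t0 / 2 → t ≤ 1 →
      |c m| / (m.factorial : ℝ) ≤ K * t := by
    intro t ht htlt ht1
    have htε : |t| < ε := by rw [abs_of_pos ht]; simp only [ht0def] at htlt ⊢; linarith
    have hsum := h t htε
    set q : ℝ := t / t0 with hqdef
    have hq0 : 0 < q := by positivity
    have hq2 : q < 1 / 2 := by rw [hqdef, div_lt_iff₀ ht0]; linarith
    have hq1 : q < 1 := by linarith
    -- split
    have hsplit := Summable.sum_add_tsum_nat_add (f := fun m : ℕ => c m * t ^ m / m.factorial)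
      (m + 1) hsum.summable
    have hfin : ∑ i ∈ Finset.range (m + 1), c i * t ^ i / (i.factorial : ℝ)
        = c m * t ^ m / (m.factorial : ℝ) := by
      rw [Finset.sum_range_succ]
      have : ∑ i ∈ Finset.range m, c i * t ^ i / (i.factorial : ℝ) = 0 := by
        apply Finset.sum_eq_zero
        intro i hi
        rw [ih i (Finset.mem_range.mp hi) (le_trans (Nat.le_of_lt_succ
          (Nat.lt_succ_of_lt (Finset.mem_range.mp hi))) hmn)]
        ring
      rw [this, zero_add]
    -- tail bound
    have hterm : ∀ i : ℕ, |c (i + (m + 1)) * t ^ (i + (m + 1)) / ((i + (m + 1)).factorial : ℝ)|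
        ≤ B * q ^ (m + 1) * q ^ i := by
      intro i
      have ht' : t = q * t0 := by rw [hqdef]; field_simp
      have : |c (i + (m + 1)) * t ^ (i + (m + 1)) / ((i + (m + 1)).factorial : ℝ)|
          = |c (i + (m + 1)) * t0 ^ (i + (m + 1)) / ((i + (m + 1)).factorial : ℝ)|
            * q ^ (i + (m + 1)) := by
        have e : c (i + (m + 1)) * (q * t0) ^ (i + (m + 1)) / ((i + (m + 1)).factorial : ℝ)
            = (c (i + (m + 1)) * t0 ^ (i + (m + 1)) / ((i + (m + 1)).factorial : ℝ))
              * q ^ (i + (m + 1)) := by rw [mul_pow]; ring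
        rw [ht', e, abs_mul, abs_of_pos (pow_pos hq0 _)]
      rw [this]
      calc |c (i + (m + 1)) * t0 ^ (i + (m + 1)) / ((i + (m + 1)).factorial : ℝ)| * q ^ (i + (m + 1))
          ≤ B * q ^ (i + (m + 1)) := by
            apply mul_le_mul_of_nonneg_right (hB _) (by positivity)
        _ = B * q ^ (m + 1) * q ^ i := by rw [pow_add]; ring
    have hgeo : Summable (fun i : ℕ => B * q ^ (m + 1) * q ^ i) :=
      (summable_geometric_of_lt_one hq0.le hq1).mul_left _
    have htail : |∑' i : ℕ, c (i + (m + 1)) * t ^ (i + (m + 1)) / ((i + (m + 1)).factorial : ℝ)|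
        ≤ 2 * B * q ^ (m + 1) := by
      have h1 : |∑' i : ℕ, c (i + (m + 1)) * t ^ (i + (m + 1)) / ((i + (m + 1)).factorial : ℝ)|
          ≤ ∑' i : ℕ, B * q ^ (m + 1) * q ^ i := by
        have hs : Summable (fun i : ℕ => |c (i + (m + 1)) * t ^ (i + (m + 1)) / ((i + (m + 1)).factorial : ℝ)|) :=
          ((summable_nat_add_iff (m+1)).mpr hsum.summable).abs
        calc |∑' i : ℕ, c (i + (m + 1)) * t ^ (i + (m + 1)) / ((i + (m + 1)).factorial : ℝ)|
            ≤ ∑' i : ℕ, |c (i + (m + 1)) * t ^ (i + (m + 1)) / ((i + (m + 1)).factorial : ℝ)| := by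
              have hs' : Summable (fun i : ℕ => ‖c (i + (m + 1)) * t ^ (i + (m + 1)) / ((i + (m + 1)).factorial : ℝ)‖) := by
                simpa only [Real.norm_eq_abs] using hs
              have h' := norm_tsum_le_tsum_norm hs'
              simpa only [Real.norm_eq_abs] using h'
          _ ≤ ∑' i : ℕ, B * q ^ (m + 1) * q ^ i := Summable.tsum_le_tsum hterm hs hgeo
      have h2 : ∑' i : ℕ, B * q ^ (m + 1) * q ^ i = B * q ^ (m + 1) * (1 - q)⁻¹ := by
        rw [tsum_mul_left, tsum_geometric_of_lt_one hq0.le hq1]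
      have h3 : (1 - q)⁻¹ ≤ 2 := by
        rw [inv_le_comm₀ (by linarith) (by norm_num)]
        linarith
      calc |∑' i : ℕ, c (i + (m + 1)) * t ^ (i + (m + 1)) / ((i + (m + 1)).factorial : ℝ)|
          ≤ B * q ^ (m + 1) * (1 - q)⁻¹ := by rw [← h2]; exact h1
        _ ≤ B * q ^ (m + 1) * 2 := by
            apply mul_le_mul_of_nonneg_left h3 (by positivity)
        _ = 2 * B * q ^ (m + 1) := by ring
    -- combine
    have hcm : |c m * t ^ m / (m.factorial : ℝ)| ≤ C * |t| ^ (n + 1) + 2 * B * q ^ (m + 1) := by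
      have : c m * t ^ m / (m.factorial : ℝ)
          = g t - ∑' i : ℕ, c (i + (m + 1)) * t ^ (i + (m + 1)) / ((i + (m + 1)).factorial : ℝ) := by
        rw [← hsum.tsum_eq, ← hsplit, hfin]; ring
      rw [this]
      calc |g t - ∑' i : ℕ, c (i + (m + 1)) * t ^ (i + (m + 1)) / ((i + (m + 1)).factorial : ℝ)|
          ≤ |g t| + |∑' i : ℕ, c (i + (m + 1)) * t ^ (i + (m + 1)) / ((i + (m + 1)).factorial : ℝ)| :=
            abs_sub _ _
        _ ≤ C * |t| ^ (n + 1) + 2 * B * q ^ (m + 1) := add_le_add (hg t htε) htail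
    -- divide by t^m
    have habs : |c m * t ^ m / (m.factorial : ℝ)| = |c m| / (m.factorial : ℝ) * t ^ m := by
      rw [abs_div, abs_mul, abs_of_pos (pow_pos ht m),
        abs_of_nonneg (by positivity : (0:ℝ) ≤ ((m.factorial : ℝ)))]
      ring
    have hrhs : C * |t| ^ (n + 1) + 2 * B * q ^ (m + 1) ≤ K * t * t ^ m := by
      obtain ⟨j, hj⟩ : ∃ j : ℕ, n + 1 = m + (j + 1) := ⟨n - m, by omega⟩
      have e1 : C * |t| ^ (n + 1) ≤ |C| * t ^ m * t := by
        rw [abs_of_pos ht, hj, pow_add]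
        have h4 : t ^ (j + 1) ≤ t := by
          calc t ^ (j + 1) ≤ t ^ 1 := pow_le_pow_of_le_one ht.le ht1 (by omega)
            _ = t := pow_one t
        calc C * (t ^ m * t ^ (j + 1)) ≤ |C| * (t ^ m * t ^ (j + 1)) := by
              apply mul_le_mul_of_nonneg_right (le_abs_self C) (by positivity)
          _ ≤ |C| * (t ^ m * t) := by
              apply mul_le_mul_of_nonneg_left (mul_le_mul_of_nonneg_left h4 (by positivity))
                (abs_nonneg _)
          _ = |C| * t ^ m * t := by ring
      have e2 : 2 * B * q ^ (m + 1) = 2 * B / t0 ^ (m + 1) * t ^ m * t := by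
        rw [hqdef, div_pow]
        field_simp
        ring
      rw [e2]
      calc C * |t| ^ (n + 1) + 2 * B / t0 ^ (m + 1) * t ^ m * t
          ≤ |C| * t ^ m * t + 2 * B / t0 ^ (m + 1) * t ^ m * t := by linarith
        _ = K * t * t ^ m := by rw [hKdef]; ring
    have hmain : |c m| / (m.factorial : ℝ) * t ^ m ≤ K * t * t ^ m := by
      rw [← habs]; exact hcm.trans hrhs
    exact le_of_mul_le_mul_right hmain (pow_pos ht m)
  -- conclude c m = 0
  have hle : |c m| / (m.factorial : ℝ) ≤ 0 := by
    have hne : Filter.NeBot (nhdsWithin (0:ℝ) (Set.Ioi 0)) := nhdsGT_neBot 0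
    have htend : Filter.Tendsto (fun t : ℝ => K * t) (nhdsWithin (0:ℝ) (Set.Ioi 0)) (nhds 0) := by
      have : Filter.Tendsto (fun t : ℝ => K * t) (nhds (0:ℝ)) (nhds (K * 0)) :=
        (continuous_const.mul continuous_id).tendsto 0
      rw [mul_zero] at this
      exact this.mono_left nhdsWithin_le_nhds
    apply ge_of_tendsto htend
    have hmin : (0:ℝ) < min (t0/2) 1 := by positivity
    filter_upwards [Ioo_mem_nhdsGT_of_mem (Set.mem_Ico.mpr ⟨le_refl _, hmin⟩)] with t ht
    obtain ⟨ht1, ht2⟩ := ht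
    exact key t ht1 (lt_of_lt_of_le ht2 (min_le_left _ _)) (le_of_lt (lt_of_lt_of_le ht2 (min_le_right _ _)))
  have : |c m| ≤ 0 := by
    have hf : (0:ℝ) < (m.factorial : ℝ) := by positivity
    calc |c m| = |c m| / (m.factorial : ℝ) * (m.factorial : ℝ) := by field_simp
      _ ≤ 0 * (m.factorial : ℝ) := mul_le_mul_of_nonneg_right hle hf.le
      _ = 0 := zero_mul _
  exact abs_eq_zero.mp (le_antisymm this (abs_nonneg _))

lemma hasSum_finset_sum {ι : Type*} {s : Finset ι} {f : ι → ℕ → ℝ} {a : ι → ℝ}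
    (h : ∀ i ∈ s, HasSum (f i) (a i)) :
    HasSum (fun m => ∑ i ∈ s, f i m) (∑ i ∈ s, a i) := by
  classical
  induction s using Finset.induction_on with
  | empty => simpa using hasSum_zero
  | insert i s' hni ih =>
    simp only [Finset.sum_insert hni]
    exact (h i (Finset.mem_insert_self i s')).add
      (ih fun j hj => h j (Finset.mem_insert_of_mem hj))

theorem degFubini_eq_sum_stirling (l x : ℝ) (r n : ℕ) (F : ℕ → ℝ) (S : ℕ → ℕ → ℝ)
    (ε : ℝ) (hε : 0 < ε)
    (hF : ∀ t : ℝ, |t| < ε →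
      HasSum (fun m : ℕ => F m * t ^ m / m.factorial)
        ((1 + l * t) ^ ((r : ℝ) / l) / (1 - x * ((1 + l * t) ^ (1 / l) - 1))))
    (hS : ∀ (k : ℕ) (t : ℝ), |t| < ε →
      HasSum (fun m : ℕ => S m k * t ^ m / m.factorial)
        ((1 / (k.factorial : ℝ)) * ((1 + l * t) ^ (1 / l) - 1) ^ k *
          (1 + l * t) ^ ((r : ℝ) / l))) :
    F n = ∑ k ∈ Finset.range (n + 1), (k.factorial : ℝ) * S n k * x ^ k := by
  set e : ℝ → ℝ := fun t => (1 + l * t) ^ (1 / l) with he_def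
  set P : ℝ → ℝ := fun t => (1 + l * t) ^ ((r : ℝ) / l) with hP_def
  -- Lipschitz-type bound for e near 0
  have hbase : HasDerivAt (fun t : ℝ => 1 + l * t) l 0 := by
    simpa using ((hasDerivAt_id (0 : ℝ)).const_mul l).const_add 1
  have hederiv : HasDerivAt e (l * (1 / l) * (1 + l * 0) ^ (1 / l - 1)) 0 :=
    hbase.rpow_const (Or.inl (by norm_num))
  have he0 : e 0 = 1 := by simp [he_def, Real.one_rpow]
  have hbigO : (fun t : ℝ => e t - 1) =O[nhds 0] (fun t : ℝ => t) := by
    have := hederiv.isBigO_sub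
    simpa [he0] using this
  obtain ⟨L, hL0, hLw⟩ := hbigO.exists_pos
  have hLbound : ∀ᶠ t in nhds (0 : ℝ), |e t - 1| ≤ L * |t| := by
    have := hLw.bound
    simpa [Real.norm_eq_abs] using this
  -- P bounded near 0
  have hPcont : ContinuousAt P 0 := by
    apply ContinuousAt.rpow_const
    · exact (continuous_const.add (continuous_const.mul continuous_id)).continuousAt
    · left; norm_num
  have hP0 : P 0 = 1 := by simp [hP_def, Real.one_rpow]
  have hPbound : ∀ᶠ t in nhds (0 : ℝ), |P t| ≤ 2 := by
    have h1 : ∀ᶠ y in nhds (P 0), |y - P 0| < 1 := eventually_abs_sub_lt (P 0) one_pos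
    filter_upwards [hPcont.tendsto.eventually h1] with t ht
    rw [hP0] at ht
    calc |P t| = |(P t - 1) + 1| := by ring_nf
      _ ≤ |P t - 1| + |(1:ℝ)| := abs_add_le _ _
      _ ≤ 2 := by rw [abs_one]; linarith
  -- smallness of t
  have htsmall : ∀ᶠ t in nhds (0 : ℝ), |t| < 1 / (2 * (|x| * L + 1)) := by
    have := eventually_abs_sub_lt (0 : ℝ) (by positivity : (0:ℝ) < 1 / (2 * (|x| * L + 1)))
    simpa using this
  -- extract δ
  obtain ⟨δ, hδ0, hδ⟩ := Metric.eventually_nhds_iff.mp (hLbound.and (hPbound.and htsmall))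
  set ε' : ℝ := min ε δ with hε'def
  have hε'0 : 0 < ε' := lt_min hε hδ0
  -- the coefficient sequence and remainder function
  set c : ℕ → ℝ := fun m => F m - ∑ k ∈ Finset.range (n + 1), (k.factorial : ℝ) * S m k * x ^ k
    with hc_def
  set g : ℝ → ℝ := fun t => P t / (1 - x * (e t - 1)) -
    ∑ k ∈ Finset.range (n + 1), (k.factorial : ℝ) * ((1 / (k.factorial : ℝ)) * (e t - 1) ^ k * P t) * x ^ k
    with hg_def
  set C : ℝ := 4 * (|x| * L) ^ (n + 1) with hC_def
  have hsum : ∀ t : ℝ, |t| < ε' → HasSum (fun m : ℕ => c m * t ^ m / m.factorial) (g t) := by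
    intro t ht
    have htε : |t| < ε := lt_of_lt_of_le ht (min_le_left _ _)
    have h1 := hF t htε
    have h2 : HasSum (fun m : ℕ => ∑ k ∈ Finset.range (n + 1),
        ((k.factorial : ℝ) * S m k * x ^ k) * t ^ m / m.factorial)
        (∑ k ∈ Finset.range (n + 1),
          (k.factorial : ℝ) * ((1 / (k.factorial : ℝ)) * (e t - 1) ^ k * P t) * x ^ k) := by
      apply hasSum_finset_sum
      intro k _
      have h3 := (hS k t htε).mul_left ((k.factorial : ℝ) * x ^ k)
      have heq : (fun m : ℕ => ((k.factorial : ℝ) * x ^ k) * (S m k * t ^ m / m.factorial))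
          = fun m : ℕ => ((k.factorial : ℝ) * S m k * x ^ k) * t ^ m / m.factorial := by
        funext m; ring
      rw [heq] at h3
      convert h3 using 1
      · rfl
      · ring
    have h4 := h1.sub h2
    have heq2 : (fun m : ℕ => c m * t ^ m / m.factorial)
        = fun m : ℕ => F m * t ^ m / m.factorial - ∑ k ∈ Finset.range (n + 1),
            ((k.factorial : ℝ) * S m k * x ^ k) * t ^ m / m.factorial := by
      funext m
      rw [hc_def]
      rw [← Finset.sum_div, ← Finset.sum_mul]
      ring
    rw [heq2]
    exact h4
  have hbound : ∀ t : ℝ, |t| < ε' → |g t| ≤ C * |t| ^ (n + 1) := by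
    intro t ht
    have htδ : dist t 0 < δ := by
      rw [Real.dist_eq, sub_zero]; exact lt_of_lt_of_le ht (min_le_right _ _)
    obtain ⟨hL1, hP1, ht1⟩ := hδ htδ
    set u : ℝ := x * (e t - 1) with hu_def
    have hu : |u| ≤ 1 / 2 := by
      rw [hu_def, abs_mul]
      calc |x| * |e t - 1| ≤ |x| * (L * |t|) :=
            mul_le_mul_of_nonneg_left hL1 (abs_nonneg _)
        _ = (|x| * L) * |t| := by ring
        _ ≤ (|x| * L) * (1 / (2 * (|x| * L + 1))) :=
            mul_le_mul_of_nonneg_left ht1.le (by positivity)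
        _ ≤ 1 / 2 := by
            rw [mul_one_div, div_le_div_iff₀ (by positivity) (by norm_num : (0:ℝ) < 2)]
            nlinarith [mul_nonneg (abs_nonneg x) hL0.le]
    have hune : u ≠ 1 := by
      intro hcon
      rw [hcon] at hu; norm_num at hu
    have hDne : (1 : ℝ) - u ≠ 0 := by
      intro hcon
      have : u = 1 := by linarith
      exact hune this
    have hDge : 1 / 2 ≤ |1 - u| := by
      calc (1:ℝ) / 2 = 1 - 1/2 := by norm_num
        _ ≤ 1 - |u| := by linarith
        _ ≤ |1 - u| := by
            have := abs_sub_abs_le_abs_sub (1:ℝ) u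
            simpa using this
    -- identity for g
    have hkey : ∀ p uu : ℝ, uu ≠ 1 →
        p / (1 - uu) - p * ((uu ^ (n + 1) - 1) / (uu - 1)) = p * uu ^ (n + 1) / (1 - uu) := by
      intro p uu h1
      have h2 : uu - 1 ≠ 0 := sub_ne_zero.mpr h1
      have h3 : 1 - uu ≠ 0 := fun hc => h2 (by linarith)
      field_simp
      ring
    have hgeq : g t = P t * u ^ (n + 1) / (1 - u) := by
      rw [hg_def]
      simp only
      have hsum_eq : ∑ k ∈ Finset.range (n + 1),
          (k.factorial : ℝ) * ((1 / (k.factorial : ℝ)) * (e t - 1) ^ k * P t) * x ^ k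
          = P t * ∑ k ∈ Finset.range (n + 1), u ^ k := by
        rw [Finset.mul_sum]
        apply Finset.sum_congr rfl
        intro k _
        have hkfac : ((k.factorial : ℝ)) ≠ 0 := Nat.cast_ne_zero.mpr k.factorial_ne_zero
        rw [hu_def, mul_pow]
        field_simp
      rw [hsum_eq, geom_sum_eq hune, ← hu_def]
      exact hkey (P t) u hune
    rw [hgeq]
    rw [abs_div, abs_mul, abs_pow]
    have h5 : |u| ^ (n + 1) ≤ (|x| * L * |t|) ^ (n + 1) := by
      apply pow_le_pow_left₀ (abs_nonneg _)
      rw [hu_def, abs_mul]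
      calc |x| * |e t - 1| ≤ |x| * (L * |t|) :=
            mul_le_mul_of_nonneg_left hL1 (abs_nonneg _)
        _ = |x| * L * |t| := by ring
    have h6 : 1 / |1 - u| ≤ 2 := by
      rw [div_le_iff₀ (by linarith : (0:ℝ) < |1 - u|)]
      linarith
    have step1 : |P t| * |u| ^ (n + 1) ≤ 2 * (|x| * L * |t|) ^ (n + 1) :=
      mul_le_mul hP1 h5 (by positivity) (by norm_num)
    calc |P t| * |u| ^ (n + 1) / |1 - u|
        = |P t| * |u| ^ (n + 1) * (1 / |1 - u|) := by ring
      _ ≤ 2 * (|x| * L * |t|) ^ (n + 1) * 2 :=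
          mul_le_mul step1 h6 (by positivity) (by positivity)
      _ = C * |t| ^ (n + 1) := by rw [hC_def, mul_pow, mul_pow]; ring
  have := coeff_zero_of_bigO c n ε' C hε'0 g hsum hbound n (le_refl n)
  rw [hc_def] at this
  simp only at this
  linarith [this]
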